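/- For integers n ≥ 2, k ≥ 1, m ≥ q ≥ 2 and any weakly decreasing tail α₁ ≥ … ≥ α_r with q > α₁, let λ = (m, q^k, α₁,…,α_r) and μ = (m+1, q^{k−1}, q−1, α₁,…,α_r) be partitions of n. Then the ratio of hook-length products satisfies H^μ/H^λ < (m−q+1)/k, where H^ν is the product of all hook lengths of ν; equivalently f^λ/f^μ < (m−q+1)/k for the numbers of standard Young tableaux. -/

import Mathlib

/-- The product of the hook lengths of the partition given by the list `l`
(parts listed from largest to smallest): the hook length of the cell in row
`i` (0-indexed) and column `j` is the number of cells to its right in its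
row, plus the number of cells below it in its column, plus one. -/
def hookProd (l : List ℕ) : ℕ :=
  ∏ i ∈ Finset.range l.length, ∏ j ∈ Finset.range (l.getD i 0),
    (l.getD i 0 - j + (List.drop (i + 1) l).countP (fun x => j < x))

def rowProd (x : ℕ) (l : List ℕ) : ℕ :=
  ∏ j ∈ Finset.range x, (x - j + l.countP (fun y => j < y))

lemma hookProd_cons (x : ℕ) (l : List ℕ) :
    hookProd (x :: l) = rowProd x l * hookProd l := by
  simp only [hookProd, rowProd, List.length_cons, Finset.prod_range_succ',
    List.getD_cons_succ, List.getD_cons_zero, List.drop_succ_cons, List.drop_zero]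
  ring

lemma hookProd_pos (l : List ℕ) : 0 < hookProd l := by
  apply Finset.prod_pos
  intro i hi
  apply Finset.prod_pos
  intro j hj
  have := Finset.mem_range.1 hj
  omega

lemma countP_replicate (a n : ℕ) (p : ℕ → Bool) :
    (List.replicate n a).countP p = if p a then n else 0 := by
  induction n with
  | zero => simp
  | succ n ih =>
    rw [List.replicate_succ, List.countP_cons]
    by_cases h : p a <;> simp [h, ih]

lemma hookProd_replicate_append (q : ℕ) (l : List ℕ) (k : ℕ) :
    hookProd (List.replicate k q ++ l) =
      (∏ i ∈ Finset.range k, rowProd q (List.replicate i q ++ l)) * hookProd l := by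
  induction k with
  | zero => simp
  | succ k ih =>
    rw [List.replicate_succ, List.cons_append, hookProd_cons, ih,
      Finset.prod_range_succ]
    ring

lemma rowProd_rep_append (x i p : ℕ) (l : List ℕ) :
    rowProd x (List.replicate i p ++ l) =
      ∏ j ∈ Finset.range x,
        (x - j + (if j < p then i else 0) + l.countP (fun y => j < y)) := by
  unfold rowProd
  refine Finset.prod_congr rfl fun j hj => ?_
  rw [List.countP_append, countP_replicate]
  simp only [decide_eq_true_eq]
  split_ifs <;> omega

lemma prod_range_sub_factorial (n : ℕ) :
    ∏ j ∈ Finset.range n, (n - j) = n.factorial := by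
  induction n with
  | zero => simp
  | succ n ih =>
    rw [Finset.prod_range_succ', Nat.factorial_succ, ← ih]
    simp [mul_comm]

section rows

variable (q k d : ℕ) (α : List ℕ)

lemma countP_zero_of_lt (hαq : ∀ x ∈ α, x < q + 1) {j : ℕ} (hj : q ≤ j) :
    α.countP (fun y => j < y) = 0 := by
  rw [List.countP_eq_zero]
  intro x hx
  have := hαq x hx
  simp only [decide_eq_true_eq, Nat.not_lt]
  omega

lemma rowB (hαq : ∀ x ∈ α, x < q + 1) (i : ℕ) :
    rowProd (q + 1) (List.replicate i (q + 1) ++ α) =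
      (∏ j ∈ Finset.range q, (q + 1 - j + i + α.countP (fun y => j < y))) * (i + 1) := by
  rw [rowProd_rep_append, Finset.prod_range_succ]
  congr 1
  · refine Finset.prod_congr rfl fun j hj => ?_
    have := Finset.mem_range.1 hj
    rw [if_pos (by omega)]
  · rw [if_pos (by omega), countP_zero_of_lt q α hαq (le_refl q)]
    omega

end rows

lemma rowB' (q : ℕ) (α : List ℕ) (hαq : ∀ x ∈ α, x < q + 1) (i : ℕ) :
    rowProd (q + 1) (List.replicate i (q + 1) ++ (q :: α)) =
      (∏ j ∈ Finset.range q, (q + 1 - j + (i + 1) + α.countP (fun y => j < y))) * (i + 1) := by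
  rw [rowProd_rep_append, Finset.prod_range_succ]
  congr 1
  · refine Finset.prod_congr rfl fun j hj => ?_
    have hjq := Finset.mem_range.1 hj
    rw [List.countP_cons, if_pos (by omega), if_pos (by simp; omega)]
    omega
  · rw [if_pos (by omega), List.countP_cons, countP_zero_of_lt q α hαq (le_refl q),
      if_neg (by simp)]
    omega

lemma rowA (q k d : ℕ) (α : List ℕ) (hαq : ∀ x ∈ α, x < q + 1) :
    rowProd (q + 1 + d) (List.replicate (k + 1) (q + 1) ++ α) =
      ((∏ j ∈ Finset.range q, (q + 1 + d - j + (k + 1) + α.countP (fun y => j < y))) *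
        (d + k + 2)) * ∏ j ∈ Finset.range d, (d - j) := by
  rw [rowProd_rep_append, Finset.prod_range_add, Finset.prod_range_succ]
  congr 1
  · congr 1
    · refine Finset.prod_congr rfl fun j hj => ?_
      have := Finset.mem_range.1 hj
      rw [if_pos (by omega)]
    · rw [if_pos (by omega), countP_zero_of_lt q α hαq (le_refl q)]
      omega
  · refine Finset.prod_congr rfl fun j hj => ?_
    rw [if_neg (by omega), countP_zero_of_lt q α hαq (by omega)]
    omega

lemma rowA' (q k d : ℕ) (α : List ℕ) (hαq : ∀ x ∈ α, x < q + 1) :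
    rowProd (q + 1 + d + 1) (List.replicate k (q + 1) ++ (q :: α)) =
      ((∏ j ∈ Finset.range q, (q + 1 + d - j + (k + 1) + α.countP (fun y => j < y) + 1)) *
        (d + k + 2)) * ∏ j ∈ Finset.range (d + 1), (d + 1 - j) := by
  have h : q + 1 + d + 1 = (q + 1) + (d + 1) := by ring
  rw [rowProd_rep_append, h, Finset.prod_range_add, Finset.prod_range_succ]
  congr 1
  · congr 1
    · refine Finset.prod_congr rfl fun j hj => ?_
      have := Finset.mem_range.1 hj
      rw [if_pos (by omega), List.countP_cons, if_pos (by simp; omega)]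
      omega
    · rw [if_pos (by omega), List.countP_cons, countP_zero_of_lt q α hαq (le_refl q),
        if_neg (by simp)]
      omega
  · refine Finset.prod_congr rfl fun j hj => ?_
    rw [if_neg (by omega), List.countP_cons, countP_zero_of_lt q α hαq (by omega),
      if_neg (by simp; omega)]
    omega
lemma key (q k d : ℕ) (hq : 1 ≤ q) (α : List ℕ) (hαq : ∀ x ∈ α, x < q + 1) :
    hookProd ((q + 1 + d + 1) :: (List.replicate k (q + 1) ++ [q] ++ α)) * (k + 1)
      < (d + 1) * hookProd ((q + 1 + d) :: (List.replicate (k + 1) (q + 1) ++ α)) := by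
  have hlist : List.replicate k (q + 1) ++ [q] ++ α = List.replicate k (q + 1) ++ (q :: α) := by
    rw [List.append_assoc]; rfl
  rw [hlist, hookProd_cons, hookProd_cons, hookProd_replicate_append,
    hookProd_replicate_append, hookProd_cons, rowA' q k d α hαq, rowA q k d α hαq]
  rw [Finset.prod_congr rfl fun i _ => rowB' q α hαq i,
      Finset.prod_congr rfl fun i _ => rowB q α hαq i]
  rw [Finset.prod_mul_distrib, Finset.prod_mul_distrib,
    prod_range_sub_factorial d, prod_range_sub_factorial (d + 1), Nat.factorial_succ,
    Finset.prod_range_succ (fun i => i + 1) k,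
    Finset.prod_range_succ'
      (fun x => ∏ j ∈ Finset.range q, (q + 1 - j + x + α.countP (fun y => j < y))) k]
  have hkey : (∏ j ∈ Finset.range q,
        (q + 1 + d - j + (k + 1) + α.countP (fun y => j < y) + 1)) * rowProd q α <
      (∏ j ∈ Finset.range q, (q + 1 + d - j + (k + 1) + α.countP (fun y => j < y))) *
        ∏ j ∈ Finset.range q, (q + 1 - j + 0 + α.countP (fun y => j < y)) := by
    have hD : rowProd q α = ∏ j ∈ Finset.range q, (q - j + α.countP (fun y => j < y)) := rfl
    rw [hD, ← Finset.prod_mul_distrib, ← Finset.prod_mul_distrib]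
    refine Finset.prod_lt_prod_of_nonempty (fun j hj => ?_) (fun j hj => ?_)
      (Finset.nonempty_range_iff.2 (by omega))
    · have := Finset.mem_range.1 hj
      have h1 : 0 < q - j + α.countP (fun y => j < y) := by omega
      positivity
    · have := Finset.mem_range.1 hj
      have h1 : q + 1 + d - j = q - j + d + 1 := by omega
      have h2 : q + 1 - j = q - j + 1 := by omega
      rw [h1, h2]
      nlinarith [Nat.zero_le (q - j), Nat.zero_le (α.countP (fun y => j < y))]
  have hC : 0 < (d + k + 2) * (d + 1) * d.factorial *
      (∏ x ∈ Finset.range k,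
        ∏ j ∈ Finset.range q, (q + 1 - j + (x + 1) + α.countP (fun y => j < y))) *
      (∏ x ∈ Finset.range k, (x + 1)) * hookProd α * (k + 1) := by
    have h1 : 0 < ∏ x ∈ Finset.range k,
        ∏ j ∈ Finset.range q, (q + 1 - j + (x + 1) + α.countP (fun y => j < y)) := by
      refine Finset.prod_pos fun x _ => Finset.prod_pos fun j hj => ?_
      have := Finset.mem_range.1 hj
      omega
    have h2 : 0 < ∏ x ∈ Finset.range k, (x + 1) :=
      Finset.prod_pos fun x _ => Nat.succ_pos x
    have h3 := hookProd_pos α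
    have h4 := Nat.factorial_pos d
    positivity
  calc _ = ((∏ j ∈ Finset.range q,
        (q + 1 + d - j + (k + 1) + α.countP (fun y => j < y) + 1)) * rowProd q α) *
        ((d + k + 2) * (d + 1) * d.factorial *
          (∏ x ∈ Finset.range k,
            ∏ j ∈ Finset.range q, (q + 1 - j + (x + 1) + α.countP (fun y => j < y))) *
          (∏ x ∈ Finset.range k, (x + 1)) * hookProd α * (k + 1)) := by ring
    _ < ((∏ j ∈ Finset.range q, (q + 1 + d - j + (k + 1) + α.countP (fun y => j < y))) *
          ∏ j ∈ Finset.range q, (q + 1 - j + 0 + α.countP (fun y => j < y))) *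
        ((d + k + 2) * (d + 1) * d.factorial *
          (∏ x ∈ Finset.range k,
            ∏ j ∈ Finset.range q, (q + 1 - j + (x + 1) + α.countP (fun y => j < y))) *
          (∏ x ∈ Finset.range k, (x + 1)) * hookProd α * (k + 1)) :=
      mul_lt_mul_of_pos_right hkey hC
    _ = _ := by ring

theorem stmt_14 (n m q k : ℕ) (α : List ℕ) (hn : 2 ≤ n) (hk : 1 ≤ k)
    (hq : 2 ≤ q) (hmq : q ≤ m)
    (hα : α.Pairwise (· ≥ ·)) (hαpos : ∀ x ∈ α, 0 < x) (hαq : ∀ x ∈ α, x < q)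
    (hsum : m + k * q + α.sum = n) :
    (hookProd ((m + 1) :: (List.replicate (k - 1) q ++ [q - 1] ++ α)) : ℚ) /
        hookProd (m :: (List.replicate k q ++ α)) <
      ((m : ℚ) - q + 1) / k := by
  obtain ⟨q, rfl⟩ : ∃ q', q = q' + 1 := ⟨q - 1, by omega⟩
  obtain ⟨k, rfl⟩ : ∃ k', k = k' + 1 := ⟨k - 1, by omega⟩
  obtain ⟨d, rfl⟩ : ∃ d, m = q + 1 + d := ⟨m - (q + 1), by omega⟩
  simp only [Nat.add_sub_cancel]
  have hLpos : (0 : ℚ) <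
      (hookProd ((q + 1 + d) :: (List.replicate (k + 1) (q + 1) ++ α)) : ℚ) := by
    exact_mod_cast hookProd_pos _
  have hKpos : (0 : ℚ) < ((k + 1 : ℕ) : ℚ) := by exact_mod_cast Nat.succ_pos k
  rw [div_lt_div_iff₀ hLpos hKpos]
  have hco : ((q + 1 + d : ℕ) : ℚ) - ((q + 1 : ℕ) : ℚ) + 1 = ((d + 1 : ℕ) : ℚ) := by
    push_cast; ring
  rw [hco]
  exact_mod_cast key q k d (by omega) α hαq
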